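/- Let R be a supertropical semiring such that eR is a nontrivial semifield, and let (q,b) be a quadratic pair on an R-module V. Let x, y, w ∈ V be anisotropic. If e·q(x+y) ≠ e·(q(x)+q(y)) and CS(x,w) + CS(y,w) ≠ 0, then CS(x+y, w) < CS(x,w) + CS(y,w) in the totally ordered semifield eR. -/

import Mathlib

open scoped Classical

namespace Supertrop

section Defs

variable (R : Type*) [CommSemiring R]

/-- The distinguished element `e = 1 + 1` of a semiring. -/
def eps : R := 1 + 1

/-- `R` is a supertropical semiring: `e` is additively idempotent, and the two
supertropical addition axioms hold. -/
def IsSupertropical : Prop :=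
  eps R + eps R = eps R ∧
    (∀ x y : R, eps R * x ≠ eps R * y → x + y = x ∨ x + y = y) ∧
    (∀ x y : R, eps R * x = eps R * y → x + y = eps R * y)

/-- The ghost ideal `eR`, as a subset of `R`. -/
def eSet : Set R := Set.range (fun a : R => eps R * a)

/-- The tangible elements `𝒯(R) = R \ eR`. -/
def tangible : Set R := {x : R | x ∉ eSet R}

/-- The nonzero ghost elements `𝒢(R) = eR \ {0}`. -/
def ghost : Set R := eSet R \ {0}

end Defs

section Orders

variable {R : Type*} [CommSemiring R]

/-- The minimal ordering on an additive monoid: `x ≤ y` iff `∃ z, x + z = y`. -/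
def mle {M : Type*} [AddCommMonoid M] (x y : M) : Prop := ∃ z, x + z = y

/-- Strict minimal ordering. -/
def mlt {M : Type*} [AddCommMonoid M] (x y : M) : Prop := mle x y ∧ x ≠ y

/-- The (total) ordering of the bipotent semiring `eR`: `u ≤ v ⟺ u + v = v`. -/
def gle (u v : R) : Prop := u + v = v

/-- The strict ordering of `eR`. -/
def glt (u v : R) : Prop := gle u v ∧ u ≠ v

end Orders

section SSF

variable (R : Type*) [CommSemiring R]

/-- `R` is a supersemifield: supertropical, every tangible element is invertible in `R`,
and `𝒢(R)` is a group under multiplication with identity `e`. -/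
def IsSupersemifield : Prop :=
  IsSupertropical R ∧
    (∀ t ∈ tangible R, IsUnit t) ∧
    eps R ∈ ghost R ∧
    (∀ g ∈ ghost R, ∀ h ∈ ghost R, g * h ∈ ghost R) ∧
    (∀ g ∈ ghost R, ∃ h ∈ ghost R, g * h = eps R)

/-- The supersemifield `R` is tangible: `e·𝒯(R) = 𝒢(R)`. -/
def TangibleSSF : Prop := (fun t => eps R * t) '' tangible R = ghost R

/-- Nontriviality: `𝒢(R) ≠ {e}`. -/
def NontrivialG : Prop := ghost R ≠ {eps R}

/-- `R` is discrete: `𝒢(R)` has a smallest element `> e`. -/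
def DiscreteR : Prop :=
  ∃ c ∈ ghost R, glt (eps R) c ∧ ∀ d ∈ ghost R, glt (eps R) d → gle c d

/-- `R` is dense: `𝒢(R)` has no smallest element `> e`. -/
def DenseR : Prop := ¬ DiscreteR R

/-- `eR` is a semifield: `e ≠ 0`, `𝒢(R)` is closed under multiplication, and every
element of `𝒢(R)` is invertible in `eR` with respect to the identity `e`. -/
def GhostSemifield : Prop :=
  eps R ∈ ghost R ∧
    (∀ g ∈ ghost R, ∀ h ∈ ghost R, g * h ∈ ghost R) ∧
    (∀ g ∈ ghost R, ∃ h ∈ ghost R, g * h = eps R)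

end SSF

section Quad

variable {R : Type*} [CommSemiring R] {V : Type*} [AddCommMonoid V] [Module R V]

/-- `b` is a (symmetric bilinear) companion of the quadratic form `q`. -/
def IsCompanion (q : V → R) (b : V → V → R) : Prop :=
  (∀ x y, b x y = b y x) ∧
    (∀ x y z, b (x + y) z = b x z + b y z) ∧
    (∀ (a : R) (x y : V), b (a • x) y = a * b x y) ∧
    (∀ x y, q (x + y) = q x + q y + b x y)

/-- `(q, b)` is a quadratic pair on `V`. -/
def IsQuadPair (q : V → R) (b : V → V → R) : Prop :=
  (∀ (a : R) (x : V), q (a • x) = a ^ 2 * q x) ∧ IsCompanion q b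

/-- `q` is a quadratic form on `V`. -/
def IsQuadForm (q : V → R) : Prop := ∃ b, IsQuadPair q b

/-- `q` is quasilinear (i.e. additive) on the submodule `W`. -/
def QuasilinearOn (q : V → R) (W : Submodule R V) : Prop :=
  ∀ u ∈ W, ∀ v ∈ W, q (u + v) = q u + q v

/-- `x` is `q`-minimal: `q x' < q x` for every `x' < x` (in the minimal orderings). -/
def QMinimal (q : V → R) (x : V) : Prop := ∀ x' : V, mlt x' x → mlt (q x') (q x)

/-- The maximum of two elements of `R` with respect to the minimal ordering. -/
noncomputable def rsup (a b : R) : R := if a = b then a else a + b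

/-- The componentwise maximum `x ∨ y` (in the minimal ordering) of two vectors
of a free module. -/
noncomputable def vsup {ι : Type*} (bV : Module.Basis ι R V) (x y : V) : V :=
  bV.repr.symm (Finsupp.zipWith rsup (by simp [rsup]) (bV.repr x) (bV.repr y))

/-- The restriction `x(J)` of a vector to a subset `J` of the index set of the base. -/
noncomputable def restrict {ι : Type*} (bV : Module.Basis ι R V) (x : V) (J : Finset ι) : V :=
  ∑ i ∈ J, (bV.repr x) i • bV i

/-- The CS-ratio `CS(x,y) = e·b(x,y)² · (e·q(x)·q(y))⁻¹`, where `inv` is the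
inversion of the semifield `eR`. -/
noncomputable def CSratio (q : V → R) (b : V → V → R) (inv : R → R) (x y : V) : R :=
  eps R * (b x y) ^ 2 * inv (eps R * (q x * q y))

end Quad

section AuxLemmas
variable {R : Type*} [CommSemiring R]

lemma eps_mul_eps (hR : IsSupertropical R) : eps R * eps R = eps R := by
  calc eps R * eps R = eps R + eps R := by rw [eps]; ring
    _ = eps R := hR.1

lemma eps_mul_mem (hR : IsSupertropical R) {u : R} (hu : u ∈ eSet R) :
    eps R * u = u := by
  obtain ⟨a, rfl⟩ := hu
  show eps R * (eps R * a) = eps R * a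
  rw [← mul_assoc, eps_mul_eps hR]

lemma add_self_eSet (hR : IsSupertropical R) {u : R} (hu : u ∈ eSet R) :
    u + u = u := by
  have h := hR.2.2 u u rfl
  rw [eps_mul_mem hR hu] at h
  exact h

lemma eps_eq_zero (hR : IsSupertropical R) {a : R} (h : eps R * a = 0) : a = 0 := by
  have h2 : a + 0 = eps R * 0 := hR.2.2 a 0 (by rw [h, mul_zero])
  simpa using h2

lemma sum_eq (hR : IsSupertropical R) {u v : R} (hu : u ∈ eSet R) (hv : v ∈ eSet R) :
    u + v = u ∨ u + v = v := by
  by_cases h : eps R * u = eps R * v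
  · right; rw [hR.2.2 u v h, eps_mul_mem hR hv]
  · exact hR.2.1 u v h

lemma gle_trans' {a b c : R} (h1 : gle a b) (h2 : gle b c) : gle a c := by
  have h : a + (b + c) = b + c := by rw [← add_assoc, h1]
  show a + c = c
  rw [h2] at h
  exact h

lemma gle_antisymm' {a b : R} (h1 : gle a b) (h2 : gle b a) : a = b := by
  calc a = b + a := h2.symm
    _ = a + b := add_comm _ _
    _ = b := h1

lemma gle_mul' {a b : R} (c : R) (h : gle a b) : gle (a * c) (b * c) := by
  show a * c + b * c = b * c
  rw [← add_mul]
  exact congrArg (· * c) h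

lemma glt_of_glt_of_gle' {a b c : R} (h1 : glt a b) (h2 : gle b c) : glt a c :=
  ⟨gle_trans' h1.1 h2, fun h => h1.2 (gle_antisymm' h1.1 (by rw [h]; exact h2))⟩

lemma sq_add_ghost (hR : IsSupertropical R) (a c : R) :
    eps R * (a + c) ^ 2 = eps R * a ^ 2 + eps R * c ^ 2 := by
  have epow : (eps R : R) ^ 2 = eps R := by rw [sq, eps_mul_eps hR]
  have hU : eps R * a ∈ eSet R := ⟨a, rfl⟩
  have hV : eps R * c ∈ eSet R := ⟨c, rfl⟩
  have h1 : (eps R * a + eps R * c) ^ 2 = eps R * (a + c) ^ 2 := by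
    rw [← mul_add, mul_pow, epow]
  have h2 : (eps R * a) ^ 2 = eps R * a ^ 2 := by rw [mul_pow, epow]
  have h3 : (eps R * c) ^ 2 = eps R * c ^ 2 := by rw [mul_pow, epow]
  rw [← h1, ← h2, ← h3]
  set u := eps R * a
  set v := eps R * c
  rcases sum_eq hR hU hV with h | h
  · have ha : u ^ 2 + u * v = u ^ 2 := by
      calc u ^ 2 + u * v = (u + v) * u := by ring
        _ = u * u := by rw [h]
        _ = u ^ 2 := (sq u).symm
    have hb : u * v + v ^ 2 = u * v := by
      calc u * v + v ^ 2 = (u + v) * v := by ring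
        _ = u * v := by rw [h]
    rw [h]
    calc u ^ 2 = u ^ 2 + u * v := ha.symm
      _ = u ^ 2 + (u * v + v ^ 2) := by rw [hb]
      _ = (u ^ 2 + u * v) + v ^ 2 := (add_assoc _ _ _).symm
      _ = u ^ 2 + v ^ 2 := by rw [ha]
  · have ha : v ^ 2 + u * v = v ^ 2 := by
      calc v ^ 2 + u * v = (u + v) * v := by ring
        _ = v * v := by rw [h]
        _ = v ^ 2 := (sq v).symm
    have hb : u * v + u ^ 2 = u * v := by
      calc u * v + u ^ 2 = (u + v) * u := by ring
        _ = v * u := by rw [h]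
        _ = u * v := mul_comm _ _
    rw [h]
    calc v ^ 2 = v ^ 2 + u * v := ha.symm
      _ = v ^ 2 + (u * v + u ^ 2) := by rw [hb]
      _ = (v ^ 2 + u * v) + u ^ 2 := (add_assoc _ _ _).symm
      _ = v ^ 2 + u ^ 2 := by rw [ha]
      _ = u ^ 2 + v ^ 2 := add_comm _ _

lemma ghost_cancel (hR : IsSupertropical R) (inv : R → R)
    (hinv : ∀ g ∈ ghost R, inv g ∈ ghost R ∧ g * inv g = eps R)
    {g u v : R} (hg : g ∈ ghost R) (hu : u ∈ eSet R) (hv : v ∈ eSet R)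
    (h : g * u = g * v) : u = v := by
  obtain ⟨_, hge⟩ := hinv g hg
  calc u = eps R * u := (eps_mul_mem hR hu).symm
    _ = (g * inv g) * u := by rw [hge]
    _ = inv g * (g * u) := by ring
    _ = inv g * (g * v) := by rw [h]
    _ = (g * inv g) * v := by ring
    _ = eps R * v := by rw [hge]
    _ = v := eps_mul_mem hR hv

lemma inv_anti (hR : IsSupertropical R) (inv : R → R)
    (hinv : ∀ g ∈ ghost R, inv g ∈ ghost R ∧ g * inv g = eps R)
    {g h : R} (hg : g ∈ ghost R) (hh : h ∈ ghost R) (hlt : glt g h) :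
    glt (inv h) (inv g) := by
  obtain ⟨hgi, hge⟩ := hinv g hg
  obtain ⟨hhi, hhe⟩ := hinv h hh
  constructor
  · show inv h + inv g = inv g
    have key : (g + h) * (inv g * inv h) = h * (inv g * inv h) :=
      congrArg (· * (inv g * inv h)) hlt.1
    have l1 : (g + h) * (inv g * inv h) = eps R * inv h + eps R * inv g := by
      rw [add_mul]
      congr 1
      · calc g * (inv g * inv h) = (g * inv g) * inv h := by ring
          _ = eps R * inv h := by rw [hge]
      · calc h * (inv g * inv h) = (h * inv h) * inv g := by ring
          _ = eps R * inv g := by rw [hhe]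
    have l2 : h * (inv g * inv h) = eps R * inv g := by
      calc h * (inv g * inv h) = (h * inv h) * inv g := by ring
        _ = eps R * inv g := by rw [hhe]
    rw [l1, l2, eps_mul_mem hR hhi.1, eps_mul_mem hR hgi.1] at key
    exact key
  · intro heq
    apply hlt.2
    calc g = eps R * g := (eps_mul_mem hR hg.1).symm
      _ = (h * inv h) * g := by rw [hhe]
      _ = h * (g * inv h) := by ring
      _ = h * (g * inv g) := by rw [heq]
      _ = h * eps R := by rw [hge]
      _ = eps R * h := mul_comm _ _
      _ = h := eps_mul_mem hR hh.1

end AuxLemmas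

/-- strict subadditivity of the CS-ratio when `q(x+y)` is not
`ν`-equivalent to `q(x) + q(y)` and `CS(x,w) + CS(y,w) ≠ 0`. -/
theorem stmt8 {R : Type*} [CommSemiring R] (hR : IsSupertropical R)
    (hsf : GhostSemifield R) (hnt : NontrivialG R)
    (inv : R → R) (hinv : ∀ g ∈ ghost R, inv g ∈ ghost R ∧ g * inv g = eps R)
    {V : Type*} [AddCommMonoid V] [Module R V] (q : V → R) (b : V → V → R)
    (hqb : IsQuadPair q b) (x y w : V)
    (hx : q x ≠ 0) (hy : q y ≠ 0) (hw : q w ≠ 0)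
    (hne : eps R * q (x + y) ≠ eps R * (q x + q y))
    (hsum : CSratio q b inv x w + CSratio q b inv y w ≠ 0) :
    glt (CSratio q b inv (x + y) w) (CSratio q b inv x w + CSratio q b inv y w) := by
  obtain ⟨hq2, hbs, hba, hbm, hqa⟩ := hqb
  have hqa' : q (x + y) = (q x + q y) + b x y := hqa x y
  -- Step A: q(x+y) = b x y and e(qx+qy) < e bxy
  have hA : q (x + y) = b x y ∧ gle (eps R * (q x + q y)) (eps R * b x y) ∧
      eps R * (q x + q y) ≠ eps R * b x y := by
    by_cases h : eps R * (q x + q y) = eps R * b x y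
    · exfalso
      exact hne (by rw [hqa', hR.2.2 _ _ h,
        eps_mul_mem hR (⟨b x y, rfl⟩ : eps R * b x y ∈ eSet R), ← h])
    · rcases hR.2.1 _ _ h with h1 | h1
      · exact absurd (by rw [hqa', h1]) hne
      · refine ⟨hqa'.trans h1, ?_, h⟩
        show eps R * (q x + q y) + eps R * b x y = eps R * b x y
        rw [← mul_add, h1]
  obtain ⟨hq_xy, hgle_st, hne_st⟩ := hA
  -- ghost membership for various elements
  have hgz : ∀ a : R, a ≠ 0 → eps R * a ∈ ghost R := fun a ha =>
    ⟨⟨a, rfl⟩, fun hz => ha (eps_eq_zero hR hz)⟩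
  have gx := hgz (q x) hx
  have gy := hgz (q y) hy
  have gw := hgz (q w) hw
  have hEE : ∀ p r : R, (eps R * p) * (eps R * r) = eps R * (p * r) := fun p r => by
    calc (eps R * p) * (eps R * r) = (eps R * eps R) * (p * r) := by ring
      _ = eps R * (p * r) := by rw [eps_mul_eps hR]
  have gxw : eps R * (q x * q w) ∈ ghost R := by
    have h := hsf.2.1 _ gx _ gw; rwa [hEE] at h
  have gyw : eps R * (q y * q w) ∈ ghost R := by
    have h := hsf.2.1 _ gy _ gw; rwa [hEE] at h
  have h_x_s : gle (eps R * q x) (eps R * (q x + q y)) := by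
    show eps R * q x + eps R * (q x + q y) = eps R * (q x + q y)
    rw [mul_add, ← add_assoc, add_self_eSet hR (⟨q x, rfl⟩ : eps R * q x ∈ eSet R)]
  have h_y_s : gle (eps R * q y) (eps R * (q x + q y)) := by
    show eps R * q y + eps R * (q x + q y) = eps R * (q x + q y)
    rw [mul_add, add_comm (eps R * q x), ← add_assoc,
      add_self_eSet hR (⟨q y, rfl⟩ : eps R * q y ∈ eSet R)]
  have hs0 : eps R * (q x + q y) ≠ 0 := by
    intro h0
    apply gx.2
    have h : eps R * q x + eps R * (q x + q y) = eps R * (q x + q y) := h_x_s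
    rw [h0, add_zero] at h
    simp only [Set.mem_singleton_iff]
    exact h
  have ht0 : eps R * b x y ≠ 0 := by
    intro h0
    apply hs0
    have h : eps R * (q x + q y) + eps R * b x y = eps R * b x y := hgle_st
    rw [h0, add_zero] at h
    exact h
  have gt : eps R * b x y ∈ ghost R := ⟨⟨b x y, rfl⟩, ht0⟩
  have gtw : eps R * (b x y * q w) ∈ ghost R := by
    have h := hsf.2.1 _ gt _ gw; rwa [hEE] at h
  -- strict inequalities between denominators
  have hden : ∀ z : V, q z ≠ 0 → gle (eps R * q z) (eps R * (q x + q y)) →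
      glt (eps R * (q z * q w)) (eps R * (b x y * q w)) := by
    intro z hz hzs
    constructor
    · have h1 : gle (eps R * q z) (eps R * b x y) := gle_trans' hzs hgle_st
      have h2 := gle_mul' (q w) h1
      show eps R * (q z * q w) + eps R * (b x y * q w) = eps R * (b x y * q w)
      rw [← mul_assoc, ← mul_assoc]
      exact h2
    · intro hq
      have h3 : (eps R * q w) * (eps R * q z) = (eps R * q w) * (eps R * b x y) := by
        calc (eps R * q w) * (eps R * q z) = (eps R * q z) * (eps R * q w) := mul_comm _ _
          _ = eps R * (q z * q w) := hEE _ _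
          _ = eps R * (b x y * q w) := hq
          _ = (eps R * b x y) * (eps R * q w) := (hEE _ _).symm
          _ = (eps R * q w) * (eps R * b x y) := mul_comm _ _
      have h4 : eps R * q z = eps R * b x y :=
        ghost_cancel hR inv hinv gw ⟨q z, rfl⟩ ⟨b x y, rfl⟩ h3
      apply hne_st
      exact gle_antisymm' hgle_st (by rw [← h4]; exact hzs)
  have hxd : glt (eps R * (q x * q w)) (eps R * (b x y * q w)) := hden x hx h_x_s
  have hyd : glt (eps R * (q y * q w)) (eps R * (b x y * q w)) := hden y hy h_y_s
  -- unfold CS ratios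
  simp only [CSratio] at hsum ⊢
  rw [hq_xy, hba x y w, sq_add_ghost hR, add_mul] at *
  set A := eps R * b x w ^ 2 with hAdef
  set B := eps R * b y w ^ 2 with hBdef
  set C0 := inv (eps R * (b x y * q w)) with hC0def
  set C1 := inv (eps R * (q x * q w)) with hC1def
  set C2 := inv (eps R * (q y * q w)) with hC2def
  have hC0g : C0 ∈ ghost R := (hinv _ gtw).1
  have hC1g : C1 ∈ ghost R := (hinv _ gxw).1
  have hC2g : C2 ∈ ghost R := (hinv _ gyw).1
  have hltC01 : glt C0 C1 := inv_anti hR inv hinv gxw gtw hxd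
  have hltC02 : glt C0 C2 := inv_anti hR inv hinv gyw gtw hyd
  have hAe : A ∈ eSet R := ⟨b x w ^ 2, hAdef.symm⟩
  have hBe : B ∈ eSet R := ⟨b y w ^ 2, hBdef.symm⟩
  have hS0 : glt (0 : R) (A * C1 + B * C2) := ⟨zero_add _, fun h => hsum h.symm⟩
  have hmemAC1 : A * C1 ∈ eSet R := ⟨b x w ^ 2 * C1, by show eps R * (b x w ^ 2 * C1) = A * C1; rw [← mul_assoc, ← hAdef]⟩
  have hmemBC2 : B * C2 ∈ eSet R := ⟨b y w ^ 2 * C2, by show eps R * (b y w ^ 2 * C2) = B * C2; rw [← mul_assoc, ← hBdef]⟩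
  have hmemAC0 : A * C0 ∈ eSet R := ⟨b x w ^ 2 * C0, by show eps R * (b x w ^ 2 * C0) = A * C0; rw [← mul_assoc, ← hAdef]⟩
  have hmemBC0 : B * C0 ∈ eSet R := ⟨b y w ^ 2 * C0, by show eps R * (b y w ^ 2 * C0) = B * C0; rw [← mul_assoc, ← hBdef]⟩
  have helper : ∀ P C : R, P ∈ eSet R → glt C0 C → C ∈ eSet R →
      gle (P * C) (A * C1 + B * C2) → glt (P * C0) (A * C1 + B * C2) := by
    intro P C hP hlt hC hle
    by_cases hP0 : P = 0
    · rw [hP0, zero_mul]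
      exact hS0
    · have hPg : P ∈ ghost R := ⟨hP, hP0⟩
      have h1 : glt (P * C0) (P * C) := by
        constructor
        · show P * C0 + P * C = P * C
          rw [mul_comm P C0, mul_comm P C, ← add_mul, hlt.1]
        · intro hq
          exact hlt.2 (ghost_cancel hR inv hinv hPg hC0g.1 hC hq)
      exact glt_of_glt_of_gle' h1 hle
  have hgleAC1S : gle (A * C1) (A * C1 + B * C2) := by
    show A * C1 + (A * C1 + B * C2) = A * C1 + B * C2
    rw [← add_assoc, add_self_eSet hR hmemAC1]
  have hgleBC2S : gle (B * C2) (A * C1 + B * C2) := by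
    show B * C2 + (A * C1 + B * C2) = A * C1 + B * C2
    rw [add_left_comm, add_self_eSet hR hmemBC2]
  have hAC0lt : glt (A * C0) (A * C1 + B * C2) :=
    helper A C1 hAe hltC01 hC1g.1 hgleAC1S
  have hBC0lt : glt (B * C0) (A * C1 + B * C2) :=
    helper B C2 hBe hltC02 hC2g.1 hgleBC2S
  refine ⟨?_, ?_⟩
  · show (A * C0 + B * C0) + (A * C1 + B * C2) = A * C1 + B * C2
    have e1 : B * C0 + (A * C1 + B * C2) = A * C1 + B * C2 := hBC0lt.1
    have e2 : A * C0 + (A * C1 + B * C2) = A * C1 + B * C2 := hAC0lt.1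
    rw [add_assoc, e1, e2]
  · rcases sum_eq hR hmemAC0 hmemBC0 with h | h
    · rw [h]
      exact hAC0lt.2
    · rw [h]
      exact hBC0lt.2


end Supertrop
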